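/- Let p, q be positive integers and let B be the (p+q)×(p+q) block matrix [[C_p, X],[0, C_q]], where X is a nonzero p×q 0-1 matrix. Then B^{lcm(p,q)+1} has an entry greater than 1; in particular θ(B) ≤ lcm(p,q). -/
import Mathlib


/-- A matrix over ℕ is a 0-1 matrix iff all its entries are at most 1. -/
def IsZO {α β : Type*} (A : Matrix α β ℕ) : Prop := ∀ i j, A i j ≤ 1

/-- The stable index of a 0-1 matrix: the smallest positive `k` with `A ^ (k+1)`
not a 0-1 matrix, or `⊤` if no such `k` exists. -/
noncomputable def theta {α : Type*} [Fintype α] [DecidableEq α]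
    (A : Matrix α α ℕ) : ℕ∞ :=
  sInf ((fun k : ℕ => (k : ℕ∞)) '' {k : ℕ | 1 ≤ k ∧ ¬ IsZO (A ^ (k + 1))})

/-- `g(n)` from the paper. -/
def g (n : ℕ) : ℕ :=
  if n % 2 = 1 then (n ^ 2 - 1) / 4
  else if n % 4 = 0 then (n ^ 2 - 4) / 4
  else (n ^ 2 - 16) / 4

/-- Basic circulant 0-1 matrix of order `n`. -/
def Cmat (n : ℕ) : Matrix (Fin n) (Fin n) ℕ :=
  Matrix.of fun i j => if (j : ℕ) = ((i : ℕ) + 1) % n then 1 else 0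

/-- Condition (★) on `(n, p, q)`. -/
def StarCond (n p q : ℕ) : Prop :=
  p + q = n ∧
  ((n % 2 = 1 ∧ ({p, q} : Finset ℕ) = {(n + 1) / 2, (n - 1) / 2}) ∨
   (n % 4 = 0 ∧ ({p, q} : Finset ℕ) = {(n + 2) / 2, (n - 2) / 2}) ∨
   (n % 4 = 2 ∧ ({p, q} : Finset ℕ) = {(n + 4) / 2, (n - 4) / 2}))

lemma Cmat_pow (n : ℕ) (hn : 0 < n) (a : ℕ) :
    (Cmat n) ^ a = Matrix.of (fun i j : Fin n =>
      if (j : ℕ) = ((i : ℕ) + a) % n then 1 else 0) := by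
  induction a with
  | zero =>
    ext i j
    simp [Matrix.one_apply, Nat.mod_eq_of_lt j.isLt, Nat.mod_eq_of_lt i.isLt,
      Fin.ext_iff, eq_comm]
  | succ a ih =>
    rw [pow_succ, ih]
    ext i j
    rw [Matrix.mul_apply]
    set k0 : Fin n := ⟨((i : ℕ) + a) % n, Nat.mod_lt _ hn⟩ with hk0
    rw [Finset.sum_eq_single k0]
    · simp only [Matrix.of_apply, Cmat, hk0]
      simp [Nat.mod_add_mod, ← add_assoc]
    · intro b _ hb
      have : (b : ℕ) ≠ ((i : ℕ) + a) % n := by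
        intro h; exact hb (Fin.ext h)
      simp [Matrix.of_apply, this]
    · intro h; exact absurd (Finset.mem_univ k0) h

lemma Cmat_pow_self (n : ℕ) (hn : 0 < n) : (Cmat n) ^ n = 1 := by
  rw [Cmat_pow n hn]
  ext i j
  simp [Matrix.one_apply, Nat.add_mod_right, Nat.mod_eq_of_lt i.isLt, Fin.ext_iff, eq_comm]

lemma Cmat_pow_dvd (n : ℕ) (hn : 0 < n) (m : ℕ) (h : n ∣ m) : (Cmat n) ^ m = 1 := by
  obtain ⟨c, rfl⟩ := h
  rw [pow_mul, Cmat_pow_self n hn, one_pow]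

lemma blocks_pow {p q : ℕ} (A : Matrix (Fin p) (Fin p) ℕ) (X : Matrix (Fin p) (Fin q) ℕ)
    (D : Matrix (Fin q) (Fin q) ℕ) (m : ℕ) :
    (Matrix.fromBlocks A X 0 D) ^ m =
      Matrix.fromBlocks (A ^ m)
        (∑ k ∈ Finset.range m, A ^ k * X * D ^ (m - 1 - k)) 0 (D ^ m) := by
  induction m with
  | zero => simp [Matrix.fromBlocks_one]
  | succ m ih =>
    have htr : A ^ m * X + (∑ k ∈ Finset.range m, A ^ k * X * D ^ (m - 1 - k)) * D =
        ∑ k ∈ Finset.range (m + 1), A ^ k * X * D ^ (m + 1 - 1 - k) := by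
      rw [Matrix.sum_mul, Finset.sum_range_succ]
      have h1 : m + 1 - 1 - m = 0 := by omega
      rw [h1, pow_zero, Matrix.mul_one, add_comm]
      congr 1
      apply Finset.sum_congr rfl
      intro k hk
      rw [Finset.mem_range] at hk
      rw [Matrix.mul_assoc, ← pow_succ]
      congr 2
      omega
    rw [pow_succ, ih, Matrix.fromBlocks_multiply]
    simp only [Matrix.mul_zero, Matrix.zero_mul, add_zero, zero_add]
    rw [htr, ← pow_succ, ← pow_succ]

theorem stmt_19 (p q : ℕ) (hp : 0 < p) (hq : 0 < q)
    (X : Matrix (Fin p) (Fin q) ℕ) (hX : IsZO X) (hX0 : X ≠ 0) :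
    (∃ i j, 1 <
      ((Matrix.fromBlocks (Cmat p) X 0 (Cmat q)) ^ (Nat.lcm p q + 1)) i j) ∧
    theta (Matrix.fromBlocks (Cmat p) X 0 (Cmat q)) ≤
      ((Nat.lcm p q : ℕ) : ℕ∞) := by
  set L := Nat.lcm p q with hL
  have hLpos : 0 < L := Nat.pos_of_ne_zero (Nat.lcm_ne_zero hp.ne' hq.ne')
  obtain ⟨i0, j0, hij⟩ : ∃ i j, X i j ≠ 0 := by
    by_contra h
    push_neg at h
    exact hX0 (by ext i j; simp [h])
  have hij1 : X i0 j0 = 1 := le_antisymm (hX i0 j0) (Nat.one_le_iff_ne_zero.mpr hij)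
  have key : 1 < ((Matrix.fromBlocks (Cmat p) X 0 (Cmat q)) ^ (L + 1))
      (Sum.inl i0) (Sum.inr j0) := by
    rw [blocks_pow]
    rw [Matrix.fromBlocks_apply₁₂]
    rw [Matrix.sum_apply]
    have hsub : ({0, L} : Finset ℕ) ⊆ Finset.range (L + 1) := by
      intro x hx
      simp at hx
      rcases hx with rfl | rfl <;> simp [Finset.mem_range]
    calc (1 : ℕ) < 2 := one_lt_two
      _ = ∑ k ∈ ({0, L} : Finset ℕ),
            ((Cmat p) ^ k * X * (Cmat q) ^ (L + 1 - 1 - k)) i0 j0 := by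
          rw [Finset.sum_pair hLpos.ne]
          have h0 : ((Cmat p) ^ 0 * X * (Cmat q) ^ (L + 1 - 1 - 0)) = X := by
            rw [pow_zero, Matrix.one_mul]
            have : L + 1 - 1 - 0 = L := by omega
            rw [this, Cmat_pow_dvd q hq L (Nat.dvd_lcm_right p q), Matrix.mul_one]
          have hL' : ((Cmat p) ^ L * X * (Cmat q) ^ (L + 1 - 1 - L)) = X := by
            have : L + 1 - 1 - L = 0 := by omega
            rw [this, pow_zero, Matrix.mul_one, Cmat_pow_dvd p hp L (Nat.dvd_lcm_left p q), Matrix.one_mul]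
          rw [h0, hL', hij1]
      _ ≤ ∑ k ∈ Finset.range (L + 1),
            ((Cmat p) ^ k * X * (Cmat q) ^ (L + 1 - 1 - k)) i0 j0 :=
          Finset.sum_le_sum_of_subset hsub
  refine ⟨⟨Sum.inl i0, Sum.inr j0, key⟩, ?_⟩
  apply sInf_le
  exact ⟨L, ⟨hLpos, fun h => absurd (h (Sum.inl i0) (Sum.inr j0)) (not_le.mpr key)⟩, rfl⟩
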